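/- (HSTS does not decrease the integrity of Secure cookies.) Let R ⊆ 𝒟 be a nonempty finite set (the related domains of a domain d) and let S ⊆ R be a nonempty subset (the related domains on which HSTS is NOT enabled). Define L_hsts = (⋁_{d' ∈ S} http(d')) ∨ (⋁_{d' ∈ R} https(d')) (the integrity component of a Secure cookie for d when HSTS is enabled on R ∖ S) and L_sec = ⋁_{d' ∈ R} (http(d') ∨ https(d')) (the integrity component of a plain Secure cookie for d). Then L_hsts ⊑_C L_sec; equivalently, by contravariance of ⊑_I, L_sec ⊑_I L_hsts. -/

import Mathlib

/-- Simple labels: generated by http(d), https(d), join (∨) and meet (∧). -/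
inductive SL (D : Type*) : Type _ where
  | http : D → SL D
  | https : D → SL D
  | join : SL D → SL D → SL D
  | meet : SL D → SL D → SL D

/-- The confidentiality pre-order ⊑_C: the smallest reflexive, transitive
relation closed under the four rules. -/
inductive Cleq {D : Type*} : SL D → SL D → Prop where
  | refl (l : SL D) : Cleq l l
  | trans {l₁ l₂ l₃ : SL D} : Cleq l₁ l₂ → Cleq l₂ l₃ → Cleq l₁ l₃
  | joinLeft (l₁ l₂ : SL D) : Cleq l₁ (SL.join l₁ l₂)
  | joinRight (l₁ l₂ : SL D) : Cleq l₂ (SL.join l₁ l₂)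
  | meetLeft (l₁ l₂ : SL D) : Cleq (SL.meet l₁ l₂) l₁
  | meetRight (l₁ l₂ : SL D) : Cleq (SL.meet l₁ l₂) l₂
  | joinLub {l₁ l₂ l₃ : SL D} : Cleq l₁ l₃ → Cleq l₂ l₃ → Cleq (SL.join l₁ l₂) l₃
  | meetGlb {l₁ l₂ l₃ : SL D} : Cleq l₁ l₂ → Cleq l₁ l₃ → Cleq l₁ (SL.meet l₂ l₃)

/-- The equivalence ≈ induced by the pre-order ⊑_C. -/
def Ceq {D : Type*} (l l' : SL D) : Prop := Cleq l l' ∧ Cleq l' l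

/-- The integrity pre-order ⊑_I, contra-variant to ⊑_C. -/
def Ileq {D : Type*} (l l' : SL D) : Prop := Cleq l' l

/-- Iterated join over a nonempty list of labels (head plus tail). -/
def joinList {D : Type*} : SL D → List (SL D) → SL D
  | a, [] => a
  | a, b :: bs => SL.join a (joinList b bs)

/-- Iterated meet over a nonempty list of labels (head plus tail). -/
def meetList {D : Type*} : SL D → List (SL D) → SL D
  | a, [] => a
  | a, b :: bs => SL.meet a (meetList b bs)

/-- Iterated join of `f` over the nonempty enumeration `d :: ds`. -/
def bigJoin {D : Type*} (f : D → SL D) (d : D) (ds : List D) : SL D :=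
  joinList (f d) (ds.map f)

/-- Iterated meet of `f` over the nonempty enumeration `d :: ds`. -/
def bigMeet {D : Type*} (f : D → SL D) (d : D) (ds : List D) : SL D :=
  meetList (f d) (ds.map f)

lemma joinList_lub {D : Type*} {t : SL D} :
    ∀ (a : SL D) (bs : List (SL D)), (∀ l ∈ a :: bs, Cleq l t) →
      Cleq (joinList a bs) t := by
  intro a bs
  induction bs generalizing a with
  | nil => intro h; exact h a (by simp)
  | cons b bs ih =>
    intro h
    refine Cleq.joinLub (h a (by simp)) (ih b ?_)
    intro l hl
    exact h l (by simpa using Or.inr (List.mem_cons.1 hl))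

lemma mem_le_joinList {D : Type*} :
    ∀ (a : SL D) (bs : List (SL D)) (l : SL D), l ∈ a :: bs →
      Cleq l (joinList a bs)
  | a, [], l, h => by simp at h; subst h; exact Cleq.refl _
  | a, b :: bs, l, h => by
    rcases List.mem_cons.1 h with h | h
    · subst h; exact Cleq.joinLeft _ _
    · exact Cleq.trans (mem_le_joinList b bs l h) (Cleq.joinRight _ _)

lemma mem_le_bigJoin {D : Type*} (f : D → SL D) (d : D) (ds : List D)
    (x : D) (hx : x ∈ d :: ds) : Cleq (f x) (bigJoin f d ds) := by
  have : f x ∈ f d :: ds.map f := by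
    rcases List.mem_cons.1 hx with h | h
    · subst h; simp
    · exact List.mem_cons_of_mem _ (List.mem_map_of_mem h)
  exact mem_le_joinList _ _ _ this

/-- HSTS does not decrease the integrity of Secure cookies: with S ⊆ R the
related domains where HSTS is NOT enabled,
L_hsts = (⋁_{d' ∈ S} http(d')) ∨ (⋁_{d' ∈ R} https(d')) satisfies
L_hsts ⊑_C L_sec where L_sec = ⋁_{d' ∈ R} (http(d') ∨ https(d'));
equivalently, L_sec ⊑_I L_hsts. -/
theorem hsts_not_decrease_integrity {D : Type*}
    (R S : Finset D) (hSR : S ⊆ R)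
    (eS : D) (esS : List D) (henumS : ∀ x : D, x ∈ eS :: esS ↔ x ∈ S)
    (eR : D) (esR : List D) (henumR : ∀ x : D, x ∈ eR :: esR ↔ x ∈ R) :
    Cleq (SL.join (bigJoin SL.http eS esS) (bigJoin SL.https eR esR))
         (bigJoin (fun d' => SL.join (SL.http d') (SL.https d')) eR esR) ∧
    Ileq (bigJoin (fun d' => SL.join (SL.http d') (SL.https d')) eR esR)
         (SL.join (bigJoin SL.http eS esS) (bigJoin SL.https eR esR)) := by
  have key : Cleq (SL.join (bigJoin SL.http eS esS) (bigJoin SL.https eR esR))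
      (bigJoin (fun d' => SL.join (SL.http d') (SL.https d')) eR esR) := by
    apply Cleq.joinLub
    · apply joinList_lub
      intro l hl
      have : ∃ x ∈ eS :: esS, SL.http x = l := by
        rcases List.mem_cons.1 hl with h | h
        · exact ⟨eS, by simp, h.symm⟩
        · rcases List.mem_map.1 h with ⟨x, hx, hfx⟩
          exact ⟨x, List.mem_cons_of_mem _ hx, hfx⟩
      rcases this with ⟨x, hx, rfl⟩
      have hxR : x ∈ eR :: esR := (henumR x).2 (hSR ((henumS x).1 hx))
      exact Cleq.trans (Cleq.joinLeft _ _)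
        (mem_le_bigJoin (fun d' => SL.join (SL.http d') (SL.https d')) eR esR x hxR)
    · apply joinList_lub
      intro l hl
      have : ∃ x ∈ eR :: esR, SL.https x = l := by
        rcases List.mem_cons.1 hl with h | h
        · exact ⟨eR, by simp, h.symm⟩
        · rcases List.mem_map.1 h with ⟨x, hx, hfx⟩
          exact ⟨x, List.mem_cons_of_mem _ hx, hfx⟩
      rcases this with ⟨x, hx, rfl⟩
      exact Cleq.trans (Cleq.joinRight _ _)
        (mem_le_bigJoin (fun d' => SL.join (SL.http d') (SL.https d')) eR esR x hx)
  exact ⟨key, key⟩
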